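/- Let k ≥ 7 be odd and let G be a graph on n vertices containing no odd cycle of length less than k. Then the sum of the weights w(D) over all good sequences D in G is at most 1. -/

import Mathlib

/-- `f` realizes a cycle of length `ℓ` in `G`: an injective map from `ZMod ℓ` whose
consecutive images are adjacent. -/
def IsCycleMap {V : Type*} (G : SimpleGraph V) {ℓ : ℕ} (f : ZMod ℓ → V) : Prop :=
  Function.Injective f ∧ ∀ i, G.Adj (f i) (f (i + 1))

/-- `G` contains no odd cycle of length less than `k`. -/
def NoShortOddCycle {V : Type*} (G : SimpleGraph V) (k : ℕ) : Prop :=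
  ∀ ℓ : ℕ, Odd ℓ → 3 ≤ ℓ → ℓ < k → ∀ f : ZMod ℓ → V, ¬ IsCycleMap G f

/-- The good sequence associated to the cycle `f = (v_0, v_1, …, v_{k-1})`:
the entries `v_2` and `v_3` are swapped. -/
def goodOfCycle {V : Type*} {k : ℕ} (f : ZMod k → V) : ZMod k → V :=
  fun i => if i = 2 then f 3 else if i = 3 then f 2 else f i

/-- `z` is a good sequence in `G`: it arises from some `k`-cycle of `G`
(quantifying over all cycle maps accounts for all `2k` rotations and reflections). -/
def IsGoodSeq {V : Type*} (G : SimpleGraph V) {k : ℕ} (z : ZMod k → V) : Prop :=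
  ∃ f : ZMod k → V, IsCycleMap G f ∧ z = goodOfCycle f

/-- The vertex sequence `z₀, z₁, z₃, z₂, z₄, …, z_{i-1}, w` (indices `0, …, i`,
with the final entry `w` at index `i`). -/
def seqAt {V : Type*} {k : ℕ} (z : ZMod k → V) (w : V) (i : ℕ) : ℕ → V :=
  fun a => if a = i then w else if a = 2 then z 3 else if a = 3 then z 2 else z (a : ZMod k)

/-- `q 0, q 1, …, q i` is an induced path in `G`. -/
def IsInducedPathOn {V : Type*} (G : SimpleGraph V) (q : ℕ → V) (i : ℕ) : Prop :=
  (∀ a b, a ≤ i → b ≤ i → q a = q b → a = b) ∧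
  (∀ a b, a ≤ i → b ≤ i → (G.Adj (q a) (q b) ↔ (b = a + 1 ∨ a = b + 1)))

/-- `q 0, q 1, …, q (k-1)` is an induced cycle in `G`. -/
def IsInducedCycleOn {V : Type*} (G : SimpleGraph V) (q : ℕ → V) (k : ℕ) : Prop :=
  (∀ a b, a < k → b < k → q a = q b → a = b) ∧
  (∀ a b, a < k → b < k →
    (G.Adj (q a) (q b) ↔
      ((b = a + 1 ∨ a = b + 1) ∨ (a = 0 ∧ b = k - 1) ∨ (b = 0 ∧ a = k - 1))))

/-- The set `A_i(D)` for the good sequence `D = z` (of a graph `G` without odd cycles of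
length less than `k`). -/
def Aset {V : Type*} (G : SimpleGraph V) (k : ℕ) (z : ZMod k → V) (i : ℕ) : Set V :=
  if i = 0 then Set.univ
  else if i = 1 then G.neighborSet (z 0)
  else if i = 2 then {w | w ∉ G.neighborSet (z 0) ∧ G.dist (z 1) w = 2}
  else if i = 3 then G.neighborSet (z 1) ∩ G.neighborSet (z 2)
  else if i = k - 1 then {w | IsInducedCycleOn G (seqAt z w (k - 1)) k}
  else {w | IsInducedPathOn G (seqAt z w i) i}

/-- The weight `w(D) = ∏_{i=0}^{k-1} |A_i(D)|⁻¹` of a good sequence `D = z`. -/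
noncomputable def weight {V : Type*} (G : SimpleGraph V) (k : ℕ) (z : ZMod k → V) : ℝ :=
  ∏ i ∈ Finset.range k, ((Nat.card ↥(Aset G k z i) : ℝ))⁻¹

/-- The good sequence `D_j = (v_j, v_{j+1}, v_{j+3}, v_{j+2}, v_{j+4}, …, v_{j+k-1})`
associated to the cycle `f = (v_0, …, v_{k-1})` (indices mod `k`). -/
def goodRot {V : Type*} {k : ℕ} (f : ZMod k → V) (j : ZMod k) : ZMod k → V :=
  goodOfCycle (fun i => f (j + i))


set_option linter.unusedSectionVars false
set_option linter.unusedVariables false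


section ZModHelpers

variable {k : ℕ} [NeZero k]

lemma castInj {a b : ℕ} (ha : a < k) (hb : b < k) (h : (a : ZMod k) = b) : a = b := by
  have := congrArg ZMod.val h
  rwa [ZMod.val_natCast_of_lt ha, ZMod.val_natCast_of_lt hb] at this

lemma castInjIff {a b : ℕ} (ha : a < k) (hb : b < k) : (a : ZMod k) = (b : ZMod k) ↔ a = b :=
  ⟨castInj ha hb, by rintro rfl; rfl⟩

lemma cast_eq_cast_add_one_iff {a b : ℕ} (ha : a < k) (hb : b < k) :
    ((b : ZMod k) = (a : ZMod k) + 1) ↔ (b = a + 1 ∨ (a = k - 1 ∧ b = 0)) := by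
  have hk : 0 < k := Nat.pos_of_ne_zero (NeZero.ne k)
  have hcast : ((a : ZMod k) + 1) = ((a + 1 : ℕ) : ZMod k) := by push_cast; ring
  constructor
  · intro h
    rw [hcast] at h
    rcases Nat.lt_or_ge (a + 1) k with h1 | h1
    · left; exact castInj hb h1 h
    · right
      have hak : a + 1 = k := by omega
      have h0 : ((a + 1 : ℕ) : ZMod k) = ((0 : ℕ) : ZMod k) := by
        rw [hak, ZMod.natCast_self, Nat.cast_zero]
      rw [h0] at h
      exact ⟨by omega, castInj hb hk h⟩
  · rintro (rfl | ⟨rfl, rfl⟩)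
    · rw [hcast]
    · rw [hcast, show k - 1 + 1 = k by omega, ZMod.natCast_self, Nat.cast_zero]

end ZModHelpers
section Graph

variable {V : Type*} {G : SimpleGraph V} {k : ℕ} [NeZero k]

lemma no_chord (hodd : Odd k) (hk : 7 ≤ k) (hG : NoShortOddCycle G k)
    {f : ZMod k → V} (hf : IsCycleMap G f) {a b : ZMod k} (h : G.Adj (f a) (f b))
    (h2 : 2 ≤ (b - a).val) (h3 : (b - a).val ≤ k - 2) (ho : Odd ((b - a).val + 1)) :
    False := by
  set e := (b - a).val with he
  haveI : NeZero (e + 1) := ⟨by omega⟩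
  apply hG (e + 1) ho (by omega) (by omega) (fun j => f (a + ((j.val : ℕ) : ZMod k)))
  have hone : (1 : ZMod (e + 1)).val = 1 := by
    rw [show (1 : ZMod (e+1)) = ((1 : ℕ) : ZMod (e+1)) by rw [Nat.cast_one],
      ZMod.val_natCast_of_lt (by omega)]
  constructor
  · intro j₁ j₂ hj
    have h' : a + ((j₁.val : ℕ) : ZMod k) = a + ((j₂.val : ℕ) : ZMod k) := hf.1 hj
    have h'' : ((j₁.val : ℕ) : ZMod k) = ((j₂.val : ℕ) : ZMod k) := by
      exact add_left_cancel h'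
    have hv : j₁.val = j₂.val :=
      castInj (lt_of_lt_of_le (ZMod.val_lt j₁) (by omega))
        (lt_of_lt_of_le (ZMod.val_lt j₂) (by omega)) h''
    exact ZMod.val_injective _ hv
  · intro j
    rcases Nat.lt_or_ge (j.val + 1) (e + 1) with hlt | hge
    · have hval : (j + 1).val = j.val + 1 := by
        rw [ZMod.val_add_of_lt (by rw [hone]; omega), hone]
      simp only [hval]
      have harg : a + ((j.val + 1 : ℕ) : ZMod k) = (a + ((j.val : ℕ) : ZMod k)) + 1 := by
        push_cast; ring
      rw [harg]
      exact hf.2 _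
    · have hjv : j.val = e := by have := ZMod.val_lt j; omega
      have hj1 : j + 1 = 0 := by
        have : j = ((e : ℕ) : ZMod (e + 1)) := by
          apply ZMod.val_injective
          rw [hjv, ZMod.val_natCast_of_lt (by omega)]
        rw [this, show ((e : ℕ) : ZMod (e+1)) + 1 = ((e + 1 : ℕ) : ZMod (e+1)) by push_cast; ring,
          ZMod.natCast_self]
      rw [hj1]
      have hg0 : a + (((0 : ZMod (e+1)).val : ℕ) : ZMod k) = a := by
        rw [ZMod.val_zero, Nat.cast_zero, add_zero]
      have hgj : a + ((e : ℕ) : ZMod k) = b := by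
        rw [he, ZMod.natCast_rightInverse (b - a)]; ring
      show G.Adj (f (a + ((j.val : ℕ) : ZMod k))) (f (a + (((0 : ZMod (e+1)).val : ℕ) : ZMod k)))
      rw [hg0, hjv, hgj]
      exact h.symm

lemma cycle_induced (hodd : Odd k) (hk : 7 ≤ k) (hG : NoShortOddCycle G k)
    {f : ZMod k → V} (hf : IsCycleMap G f) (a b : ZMod k) :
    G.Adj (f a) (f b) ↔ (b = a + 1 ∨ a = b + 1) := by
  constructor
  · intro h
    have hab : b ≠ a := by
      intro hba
      exact G.irrefl (by rwa [hba] at h)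
    have hne : b - a ≠ 0 := sub_ne_zero.mpr hab
    set e := (b - a).val with he
    have he0 : e ≠ 0 := fun h0 => hne ((ZMod.val_eq_zero _).mp h0)
    have helt : e < k := ZMod.val_lt _
    have hee' : (a - b).val = k - e := by
      have hab' : a - b = -(b - a) := by ring
      rw [hab', ZMod.neg_val, if_neg hne]
    rcases eq_or_ne e 1 with h1 | h1
    · left
      have : b - a = ((1 : ℕ) : ZMod k) := by
        rw [← h1, he, ZMod.natCast_rightInverse]
      rw [Nat.cast_one] at this
      have := sub_eq_iff_eq_add.mp this
      rw [this]; ring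
    rcases eq_or_ne e (k - 1) with hk1 | hk1
    · right
      have : a - b = ((1 : ℕ) : ZMod k) := by
        rw [show (1 : ℕ) = k - e by omega, ← hee', ZMod.natCast_rightInverse]
      rw [Nat.cast_one] at this
      have := sub_eq_iff_eq_add.mp this
      rw [this]; ring
    · exfalso
      have hbound : 2 ≤ e ∧ e ≤ k - 2 := by omega
      rcases Nat.even_or_odd (e + 1) with hev | hod
      · -- then (k - e) + 1 is odd
        obtain ⟨t, ht⟩ := id hodd
        obtain ⟨s, hs⟩ := id hev
        apply no_chord hodd hk hG hf h.symm (a := b) (b := a)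
        · rw [hee']; omega
        · rw [hee']; omega
        · rw [hee']; exact ⟨t + 1 - s, by omega⟩
      · exact no_chord hodd hk hG hf h hbound.1 hbound.2 hod
  · rintro (rfl | rfl)
    · exact hf.2 a
    · exact (hf.2 b).symm

end Graph
section Membership

variable {V : Type*} {G : SimpleGraph V} {k : ℕ} [NeZero k]

lemma adj_iff_nat (hodd : Odd k) (hk : 7 ≤ k) (hG : NoShortOddCycle G k)
    {f : ZMod k → V} (hf : IsCycleMap G f) {a b : ℕ} (ha : a < k) (hb : b < k) :
    G.Adj (f a) (f b) ↔
      ((b = a + 1 ∨ (a = k - 1 ∧ b = 0)) ∨ (a = b + 1 ∨ (b = k - 1 ∧ a = 0))) := by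
  rw [cycle_induced hodd hk hG hf, cast_eq_cast_add_one_iff ha hb,
    cast_eq_cast_add_one_iff hb ha]

lemma pathOn_congr {q q' : ℕ → V} {i : ℕ} (h : ∀ a, a ≤ i → q a = q' a) :
    IsInducedPathOn G q i ↔ IsInducedPathOn G q' i := by
  unfold IsInducedPathOn
  constructor <;> rintro ⟨h1, h2⟩ <;> refine ⟨fun a b ha hb he => ?_, fun a b ha hb => ?_⟩
  · exact h1 a b ha hb (by rw [h a ha, h b hb]; exact he)
  · rw [← h a ha, ← h b hb]; exact h2 a b ha hb
  · exact h1 a b ha hb (by rw [← h a ha, ← h b hb]; exact he)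
  · rw [h a ha, h b hb]; exact h2 a b ha hb

lemma cycleOn_congr {q q' : ℕ → V} {m : ℕ} (h : ∀ a, a < m → q a = q' a) :
    IsInducedCycleOn G q m ↔ IsInducedCycleOn G q' m := by
  unfold IsInducedCycleOn
  constructor <;> rintro ⟨h1, h2⟩ <;> refine ⟨fun a b ha hb he => ?_, fun a b ha hb => ?_⟩
  · exact h1 a b ha hb (by rw [h a ha, h b hb]; exact he)
  · rw [← h a ha, ← h b hb]; exact h2 a b ha hb
  · exact h1 a b ha hb (by rw [← h a ha, ← h b hb]; exact he)
  · rw [h a ha, h b hb]; exact h2 a b ha hb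

lemma Aset_congr (hk : 7 ≤ k) {z z' : ZMod k → V} {i : ℕ} (hik : i < k)
    (h : ∀ j : ℕ, j < i → z j = z' j) : Aset G k z i = Aset G k z' i := by
  have h0 : (0 : ZMod k) = ((0 : ℕ) : ZMod k) := by rw [Nat.cast_zero]
  have h1 : (1 : ZMod k) = ((1 : ℕ) : ZMod k) := by rw [Nat.cast_one]
  have h2 : (2 : ZMod k) = ((2 : ℕ) : ZMod k) := by rw [Nat.cast_ofNat]
  have h3 : (3 : ZMod k) = ((3 : ℕ) : ZMod k) := by rw [Nat.cast_ofNat]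
  rcases i with _ | _ | _ | _ | i
  · rfl
  · simp only [Aset, if_neg (by omega : (1:ℕ) ≠ 0), if_pos rfl]
    rw [h0, h 0 (by omega)]
    simp only [if_true]
  · simp only [Aset, if_neg (by omega : (2:ℕ) ≠ 0), if_neg (by omega : (2:ℕ) ≠ 1), if_pos rfl]
    rw [h0, h1, h 0 (by omega), h 1 (by omega)]
    simp only [if_true]
  · simp only [Aset, if_neg (by omega : (3:ℕ) ≠ 0), if_neg (by omega : (3:ℕ) ≠ 1),
      if_neg (by omega : (3:ℕ) ≠ 2), if_pos rfl]
    rw [h1, h2, h 1 (by omega), h 2 (by omega)]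
    simp only [if_true]
  · set m := i + 4 with hm
    have hz2 : z 2 = z' 2 := by rw [h2]; exact h 2 (by omega)
    have hz3 : z 3 = z' 3 := by rw [h3]; exact h 3 (by omega)
    simp only [Aset, if_neg (by omega : m ≠ 0), if_neg (by omega : m ≠ 1),
      if_neg (by omega : m ≠ 2), if_neg (by omega : m ≠ 3)]
    by_cases hkm : m = k - 1
    · rw [if_pos hkm, if_pos hkm]
      ext w
      simp only [Set.mem_setOf_eq]
      apply cycleOn_congr
      intro a hak
      unfold seqAt
      by_cases hai : a = k - 1
      · rw [if_pos hai, if_pos hai]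
      · rw [if_neg hai, if_neg hai]
        by_cases ha2 : a = 2
        · rw [if_pos ha2, if_pos ha2, hz3]
        · rw [if_neg ha2, if_neg ha2]
          by_cases ha3 : a = 3
          · rw [if_pos ha3, if_pos ha3, hz2]
          · rw [if_neg ha3, if_neg ha3]
            exact h a (by omega)
    · rw [if_neg hkm, if_neg hkm]
      ext w
      simp only [Set.mem_setOf_eq]
      apply pathOn_congr
      intro a hai
      unfold seqAt
      by_cases hm' : a = m
      · rw [if_pos hm', if_pos hm']
      · rw [if_neg hm', if_neg hm']
        by_cases ha2 : a = 2
        · rw [if_pos ha2, if_pos ha2, hz3]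
        · rw [if_neg ha2, if_neg ha2]
          by_cases ha3 : a = 3
          · rw [if_pos ha3, if_pos ha3, hz2]
          · rw [if_neg ha3, if_neg ha3]
            exact h a (by omega)

end Membership
section GoodMem

variable {V : Type*} {G : SimpleGraph V} {k : ℕ} [NeZero k]

lemma good_mem (hodd : Odd k) (hk : 7 ≤ k) (hG : NoShortOddCycle G k)
    {f : ZMod k → V} (hf : IsCycleMap G f) {i : ℕ} (hik : i < k) :
    goodOfCycle f ((i : ℕ) : ZMod k) ∈ Aset G k (goodOfCycle f) i := by
  set z := goodOfCycle f with hzdef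
  have h0 : (0 : ZMod k) = ((0 : ℕ) : ZMod k) := by rw [Nat.cast_zero]
  have h1 : (1 : ZMod k) = ((1 : ℕ) : ZMod k) := by rw [Nat.cast_one]
  have h2 : (2 : ZMod k) = ((2 : ℕ) : ZMod k) := by rw [Nat.cast_ofNat]
  have h3 : (3 : ZMod k) = ((3 : ℕ) : ZMod k) := by rw [Nat.cast_ofNat]
  have hz : ∀ j : ℕ, j < k → j ≠ 2 → j ≠ 3 → z ((j : ℕ) : ZMod k) = f ((j : ℕ) : ZMod k) := by
    intro j hjk hj2 hj3
    show goodOfCycle f _ = _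
    unfold goodOfCycle
    rw [if_neg, if_neg]
    · intro heq; rw [h3] at heq; exact hj3 (castInj hjk (by omega) heq)
    · intro heq; rw [h2] at heq; exact hj2 (castInj hjk (by omega) heq)
  have hz2 : z (((2 : ℕ) : ℕ) : ZMod k) = f ((3 : ℕ) : ZMod k) := by
    show goodOfCycle f _ = _
    unfold goodOfCycle
    rw [if_pos h2.symm, h3]
  have hz3 : z (((3 : ℕ) : ℕ) : ZMod k) = f ((2 : ℕ) : ZMod k) := by
    show goodOfCycle f _ = _
    unfold goodOfCycle
    rw [if_neg, if_pos h3.symm, h2]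
    intro heq; rw [h2] at heq
    exact absurd (castInj (by omega) (by omega) heq) (by omega)
  have hadj : ∀ {a b : ℕ}, a < k → b < k →
      (G.Adj (f ((a : ℕ) : ZMod k)) (f ((b : ℕ) : ZMod k)) ↔
        ((b = a + 1 ∨ (a = k - 1 ∧ b = 0)) ∨ (a = b + 1 ∨ (b = k - 1 ∧ a = 0)))) :=
    fun ha hb => adj_iff_nat hodd hk hG hf ha hb
  rcases i with _ | _ | _ | _ | m
  · simp [Aset]
  · have hA : Aset G k z 1 = G.neighborSet (z 0) := by simp [Aset]
    rw [hA, SimpleGraph.mem_neighborSet, h0, hz 0 (by omega) (by omega) (by omega),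
      hz 1 (by omega) (by omega) (by omega), hadj (by omega) (by omega)]
    omega
  · have hA : Aset G k z 2 = {w | w ∉ G.neighborSet (z 0) ∧ G.dist (z 1) w = 2} := by
      simp [Aset]
    rw [hA, hz2]
    have ha12 : G.Adj (f ((1 : ℕ) : ZMod k)) (f ((2 : ℕ) : ZMod k)) :=
      (hadj (by omega) (by omega)).mpr (by omega)
    have ha23 : G.Adj (f ((2 : ℕ) : ZMod k)) (f ((3 : ℕ) : ZMod k)) :=
      (hadj (by omega) (by omega)).mpr (by omega)
    constructor
    · rw [SimpleGraph.mem_neighborSet, h0, hz 0 (by omega) (by omega) (by omega),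
        hadj (by omega) (by omega)]
      omega
    · rw [h1, hz 1 (by omega) (by omega) (by omega)]
      set p : G.Walk (f ((1 : ℕ) : ZMod k)) (f ((3 : ℕ) : ZMod k)) :=
        SimpleGraph.Walk.cons ha12 (SimpleGraph.Walk.cons ha23 SimpleGraph.Walk.nil) with hp
      have hle : G.dist (f ((1 : ℕ) : ZMod k)) (f ((3 : ℕ) : ZMod k)) ≤ 2 := by
        have := SimpleGraph.dist_le p
        simpa [hp] using this
      have hne : f ((1 : ℕ) : ZMod k) ≠ f ((3 : ℕ) : ZMod k) := by
        intro hq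
        exact absurd (castInj (by omega) (by omega) (hf.1 hq)) (by omega)
      have hpos := SimpleGraph.Reachable.pos_dist_of_ne ⟨p⟩ hne
      have hnadj : ¬ G.Adj (f ((1 : ℕ) : ZMod k)) (f ((3 : ℕ) : ZMod k)) := by
        rw [hadj (by omega) (by omega)]; omega
      have hd1 : G.dist (f ((1 : ℕ) : ZMod k)) (f ((3 : ℕ) : ZMod k)) ≠ 1 := fun hd =>
        hnadj (SimpleGraph.dist_eq_one_iff_adj.mp hd)
      omega
  · have hA : Aset G k z 3 = G.neighborSet (z 1) ∩ G.neighborSet (z 2) := by simp [Aset]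
    rw [hA, hz3]
    constructor
    · rw [SimpleGraph.mem_neighborSet, h1, hz 1 (by omega) (by omega) (by omega),
        hadj (by omega) (by omega)]
      omega
    · rw [SimpleGraph.mem_neighborSet, h2, hz2, hadj (by omega) (by omega)]
      omega
  · set i := m + 4 with hm
    have hq : ∀ w, ∀ a, a ≤ i → a ≠ i → seqAt z w i a = f ((a : ℕ) : ZMod k) := by
      intro w a ha hai
      unfold seqAt
      rw [if_neg hai]
      by_cases ha2 : a = 2
      · subst ha2; rw [if_pos rfl, h3]; exact hz3
      · rw [if_neg ha2]
        by_cases ha3 : a = 3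
        · subst ha3; rw [if_pos rfl, h2]; exact hz2
        · rw [if_neg ha3]
          exact hz a (by omega) ha2 ha3
    have hqi : ∀ a, a ≤ i → seqAt z (f ((i : ℕ) : ZMod k)) i a = f ((a : ℕ) : ZMod k) := by
      intro a ha
      by_cases hai : a = i
      · subst hai; unfold seqAt; rw [if_pos rfl]
      · exact hq _ a ha hai
    have hzi : z ((i : ℕ) : ZMod k) = f ((i : ℕ) : ZMod k) :=
      hz i hik (by omega) (by omega)
    by_cases hki : i = k - 1
    · have hA : Aset G k z i = {w | IsInducedCycleOn G (seqAt z w (k - 1)) k} := by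
        simp only [Aset, if_neg (by omega : i ≠ 0), if_neg (by omega : i ≠ 1),
          if_neg (by omega : i ≠ 2), if_neg (by omega : i ≠ 3), if_pos hki]
      rw [hA, ← hki, Set.mem_setOf_eq, hzi]
      constructor
      · intro a b ha hb he
        rw [hqi a (by omega), hqi b (by omega)] at he
        exact castInj (by omega) (by omega) (hf.1 he)
      · intro a b ha hb
        rw [hqi a (by omega), hqi b (by omega), hadj (by omega) (by omega)]
        omega
    · have hA : Aset G k z i = {w | IsInducedPathOn G (seqAt z w i) i} := by
        simp only [Aset, if_neg (by omega : i ≠ 0), if_neg (by omega : i ≠ 1),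
          if_neg (by omega : i ≠ 2), if_neg (by omega : i ≠ 3), if_neg hki]
      rw [hA, Set.mem_setOf_eq, hzi]
      have hik2 : i ≤ k - 2 := by omega
      constructor
      · intro a b ha hb he
        rw [hqi a ha, hqi b hb] at he
        exact castInj (by omega) (by omega) (hf.1 he)
      · intro a b ha hb
        rw [hqi a ha, hqi b hb, hadj (by omega) (by omega)]
        omega

end GoodMem
section Counting

open Finset

lemma counting {V : Type*} [Fintype V] {k : ℕ} [NeZero k] (v0 : V)
    (S : Finset (ZMod k → V)) (A : (ZMod k → V) → ℕ → Set V)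
    (hdep : ∀ z z' : ZMod k → V, ∀ i, i < k →
      (∀ j : ℕ, j < i → z ((j : ℕ) : ZMod k) = z' ((j : ℕ) : ZMod k)) → A z i = A z' i)
    (hmem : ∀ z ∈ S, ∀ i, i < k → z ((i : ℕ) : ZMod k) ∈ A z i) :
    ∑ z ∈ S, ∏ i ∈ Finset.range k, ((Nat.card ↥(A z i) : ℝ))⁻¹ ≤ 1 := by
  classical
  set trunc : ℕ → (ZMod k → V) → (ZMod k → V) :=
    fun m z j => if j.val < m then z j else v0 with htrunc
  have htt : ∀ m z, trunc m (trunc (m + 1) z) = trunc m z := by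
    intro m z
    funext j
    simp only [htrunc]
    by_cases hj : j.val < m
    · rw [if_pos hj, if_pos hj, if_pos (by omega)]
    · rw [if_neg hj, if_neg hj]
  have claim : ∀ m, m ≤ k →
      ∑ z ∈ S.image (trunc m), ∏ i ∈ Finset.range m, ((Nat.card ↥(A z i) : ℝ))⁻¹ ≤ 1 := by
    intro m
    induction m with
    | zero =>
      intro _
      simp only [Finset.prod_range_zero, Finset.sum_const, nsmul_eq_mul, mul_one]
      have hsub : S.image (trunc 0) ⊆ {fun _ => v0} := by
        intro x hx
        obtain ⟨z, _, rfl⟩ := Finset.mem_image.mp hx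
        simp only [Finset.mem_singleton]
        funext j
        simp [htrunc]
      have := Finset.card_le_card hsub
      simp only [Finset.card_singleton] at this
      exact_mod_cast this
    | succ m ih =>
      intro hmk1
      have hmk : m < k := by omega
      have key : ∀ p ∈ S.image (trunc (m + 1)), trunc m p ∈ S.image (trunc m) := by
        intro p hp
        obtain ⟨z, hz, rfl⟩ := Finset.mem_image.mp hp
        exact Finset.mem_image.mpr ⟨z, hz, (htt m z).symm⟩
      rw [← Finset.sum_fiberwise_of_maps_to key]
      refine le_trans (Finset.sum_le_sum ?_) (ih (by omega))
      intro q hq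
      set Fq := (S.image (trunc (m + 1))).filter (fun p => trunc m p = q) with hFq
      have hagree : ∀ p ∈ Fq, ∀ j : ℕ, j < m →
          p ((j : ℕ) : ZMod k) = q ((j : ℕ) : ZMod k) := by
        intro p hp j hj
        have hpq : trunc m p = q := (Finset.mem_filter.mp hp).2
        rw [← hpq]
        simp only [htrunc]
        rw [if_pos (by rw [ZMod.val_natCast_of_lt (by omega)]; exact hj)]
      have hA : ∀ p ∈ Fq, ∀ i, i ≤ m → A p i = A q i := fun p hp i hi =>
        hdep p q i (by omega) (fun j hj => hagree p hp j (by omega))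
      have hterm : ∀ p ∈ Fq, ∏ i ∈ Finset.range (m + 1), ((Nat.card ↥(A p i) : ℝ))⁻¹ =
          (∏ i ∈ Finset.range m, ((Nat.card ↥(A q i) : ℝ))⁻¹) *
            ((Nat.card ↥(A q m) : ℝ))⁻¹ := by
        intro p hp
        rw [Finset.prod_range_succ]
        congr 1
        · exact Finset.prod_congr rfl fun i hi => by
            rw [hA p hp i (le_of_lt (Finset.mem_range.mp hi))]
        · rw [hA p hp m le_rfl]
      rw [Finset.sum_congr rfl hterm, Finset.sum_const, nsmul_eq_mul]
      set Pq := ∏ i ∈ Finset.range m, ((Nat.card ↥(A q i) : ℝ))⁻¹ with hPqdef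
      have hPq : 0 ≤ Pq := Finset.prod_nonneg fun i _ => by positivity
      set c := Nat.card ↥(A q m) with hc
      have hcard : Fq.card ≤ c := by
        have hfin : (A q m).Finite := Set.toFinite _
        have hcc : c = hfin.toFinset.card := by
          rw [hc, Nat.card_coe_set_eq, Set.ncard_eq_toFinset_card _ hfin]
        rw [hcc]
        apply Finset.card_le_card_of_injOn (fun p => p ((m : ℕ) : ZMod k))
        · intro p hp
          beta_reduce
          rw [Finset.mem_coe, Set.Finite.mem_toFinset]
          obtain ⟨z, hz, rfl⟩ := Finset.mem_image.mp (Finset.mem_filter.mp hp).1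
          have hpm : trunc (m + 1) z ((m : ℕ) : ZMod k) = z ((m : ℕ) : ZMod k) := by
            simp only [htrunc]
            rw [if_pos (by rw [ZMod.val_natCast_of_lt (by omega)]; omega)]
          rw [hpm]
          have h1 : z ((m : ℕ) : ZMod k) ∈ A z m := hmem z hz m hmk
          have h2 : A z m = A (trunc (m + 1) z) m := by
            apply hdep z (trunc (m + 1) z) m hmk
            intro j hj
            simp only [htrunc]
            rw [if_pos (by rw [ZMod.val_natCast_of_lt (by omega)]; omega)]
          have h3 : A (trunc (m + 1) z) m = A q m := hA _ hp m le_rfl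
          rw [← h3, ← h2]
          exact h1
        · intro p hp p' hp' hpp
          have hp := Finset.mem_filter.mp (Finset.mem_coe.mp hp)
          have hp' := Finset.mem_filter.mp (Finset.mem_coe.mp hp')
          obtain ⟨z, hz, rfl⟩ := Finset.mem_image.mp hp.1
          obtain ⟨z', hz', rfl⟩ := Finset.mem_image.mp hp'.1
          funext j
          rcases lt_trichotomy j.val m with hj | hj | hj
          · have f1 : trunc m (trunc (m + 1) z) j = trunc (m + 1) z j := by
              simp only [htrunc]
              exact if_pos hj
            have f2 : trunc m (trunc (m + 1) z') j = trunc (m + 1) z' j := by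
              simp only [htrunc]
              exact if_pos hj
            rw [← f1, ← f2, hp.2, hp'.2]
          · have hjm : j = ((m : ℕ) : ZMod k) := by
              apply ZMod.val_injective
              rw [ZMod.val_natCast_of_lt (by omega)]
              exact hj
            rw [hjm]
            exact hpp
          · simp only [htrunc]
            rw [if_neg (by omega), if_neg (by omega)]
      rcases Nat.eq_zero_or_pos c with hc0 | hcpos
      · have : Fq.card = 0 := by omega
        rw [this]
        simpa using hPq
      · have hcR : (0 : ℝ) < (c : ℝ) := by exact_mod_cast hcpos
        calc (Fq.card : ℝ) * (Pq * ((c : ℝ))⁻¹)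
            = Pq * ((Fq.card : ℝ) / (c : ℝ)) := by ring
          _ ≤ Pq * 1 := by
              apply mul_le_mul_of_nonneg_left _ hPq
              rw [div_le_one hcR]
              exact_mod_cast hcard
          _ = Pq := mul_one _
  have htk : trunc k = id := by
    funext z j
    simp only [htrunc, id_eq]
    rw [if_pos (ZMod.val_lt j)]
  have := claim k le_rfl
  rwa [htk, Finset.image_id] at this

end Counting

/-- The sum of the weights of all good sequences in `G` is at most `1`. -/
theorem sum_of_all_weights_le_one {V : Type*} [Fintype V] (k : ℕ) (hodd : Odd k)
    (hk : 7 ≤ k) (G : SimpleGraph V) (hG : NoShortOddCycle G k) :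
    ∑ᶠ z ∈ {z : ZMod k → V | IsGoodSeq G z}, weight G k z ≤ 1 := by
  classical
  haveI : NeZero k := ⟨by omega⟩
  have hfin : {z : ZMod k → V | IsGoodSeq G z}.Finite := Set.toFinite _
  rw [finsum_mem_eq_finite_toFinset_sum _ hfin]
  rcases Finset.eq_empty_or_nonempty hfin.toFinset with he | ⟨z0, hz0⟩
  · rw [he]; simp
  · unfold weight
    apply counting (z0 0) hfin.toFinset (Aset G k)
    · intro z z' i hik hagree
      exact Aset_congr hk hik hagree
    · intro z hz i hik
      obtain ⟨f, hf, rfl⟩ := (Set.Finite.mem_toFinset hfin).mp hz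
      exact good_mem hodd hk hG hf hik
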